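/- For any invertible matrices M, N ∈ ℂⁿˣⁿ and k ≥ 1, the k-th derivative of the matrix-valued function s ↦ (sE − A)⁻¹ at a point σ where σE − A is invertible equals (−1)^k k! ((σE − A)⁻¹E)^k (σE − A)⁻¹. -/

import Mathlib

open Matrix
open scoped Matrix

attribute [local instance] Matrix.linftyOpNormedRing Matrix.linftyOpNormedAlgebra

section Aux
variable {n : ℕ} (E A : Matrix (Fin n) (Fin n) ℂ)

private lemma res_open : IsOpen {s : ℂ | IsUnit (s • E - A).det} := by
  have hc : Continuous fun s : ℂ => (s • E - A).det := by
    apply Continuous.matrix_det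
    exact (continuous_id.smul continuous_const).sub continuous_const
  have : {s : ℂ | IsUnit (s • E - A).det}
      = (fun s : ℂ => (s • E - A).det) ⁻¹' ({0}ᶜ) := by
    ext s; simp [isUnit_iff_ne_zero]
  rw [this]
  exact isOpen_compl_singleton.preimage hc

private lemma hasDerivAt_res (s : ℂ) (hs : IsUnit (s • E - A).det) :
    HasDerivAt (fun s : ℂ => (s • E - A)⁻¹)
      (-((s • E - A)⁻¹ * E * (s • E - A)⁻¹)) s := by
  have hu : IsUnit (s • E - A) := (isUnit_iff_isUnit_det _).2 hs
  have hg : HasDerivAt (fun s : ℂ => s • E - A) E s := by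
    have h0 := ((hasDerivAt_id s).smul_const E).sub_const A
    simp only [id, one_smul] at h0
    exact h0
  have hinv : HasFDerivAt (Ring.inverse : Matrix (Fin n) (Fin n) ℂ → _)
      (-(ContinuousLinearMap.mulLeftRight ℂ _ (↑hu.unit⁻¹) (↑hu.unit⁻¹))) (s • E - A) := by
    simpa [hu.unit_spec] using hasFDerivAt_ringInverse (𝕜 := ℂ) hu.unit
  have h1 := hinv.comp_hasDerivAt s hg
  have hcoe : (↑hu.unit⁻¹ : Matrix (Fin n) (Fin n) ℂ) = (s • E - A)⁻¹ := by
    rw [Matrix.coe_units_inv, hu.unit_spec]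
  have hfun : (fun s : ℂ => (s • E - A)⁻¹)
      = fun s : ℂ => Ring.inverse (s • E - A) := by
    funext t; exact Matrix.nonsing_inv_eq_ringInverse _
  rw [hfun]
  simp only [hcoe] at h1
  exact h1

private lemma hasDerivAt_pow_res (k : ℕ) (s : ℂ) (hs : IsUnit (s • E - A).det) :
    HasDerivAt (fun s : ℂ => ((s • E - A)⁻¹ * E) ^ k * (s • E - A)⁻¹)
      ((-(k + 1 : ℂ)) • (((s • E - A)⁻¹ * E) ^ (k + 1) * (s • E - A)⁻¹)) s := by
  induction k with
  | zero =>
    simpa [neg_smul] using (hasDerivAt_res E A s hs)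
  | succ k IH =>
    have h1 : HasDerivAt (fun s : ℂ => (s • E - A)⁻¹ * E)
        (-((s • E - A)⁻¹ * E * (s • E - A)⁻¹) * E) s :=
      (hasDerivAt_res E A s hs).mul_const E
    have h2 := h1.mul IH
    convert h2 using 1 <;> try rfl
    · funext t; rw [pow_succ', mul_assoc]; rfl
    · push_cast
      rw [show (-(((k:ℂ)+1)+1) : ℂ) = (-1) + (-((k:ℂ)+1)) from by ring,
        add_smul, neg_one_smul, mul_smul_comm]
      simp only [pow_succ', mul_assoc, neg_mul]

private lemma iter_res (k : ℕ) :
    ∀ s : ℂ, IsUnit (s • E - A).det → ∀ i j : Fin n,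
      iteratedDeriv k (fun s : ℂ => (s • E - A)⁻¹ i j) s
        = (((-1 : ℂ) ^ k * (k.factorial : ℂ)) •
            (((s • E - A)⁻¹ * E) ^ k * (s • E - A)⁻¹)) i j := by
  induction k with
  | zero => intro s hs i j; simp
  | succ k IH =>
    intro s hs i j
    rw [iteratedDeriv_succ]
    have hev : (iteratedDeriv k (fun s : ℂ => (s • E - A)⁻¹ i j))
        =ᶠ[nhds s] (fun t => ((((-1:ℂ)^k * (k.factorial : ℂ)) •
            (((t • E - A)⁻¹ * E) ^ k * (t • E - A)⁻¹)) i j)) := by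
      filter_upwards [(res_open E A).mem_nhds hs] with t ht
      exact IH t ht i j
    rw [hev.deriv_eq]
    have hD := (hasDerivAt_pow_res E A k s hs).const_smul
        ((-1:ℂ)^k * (k.factorial : ℂ))
    have hD2 := ((Matrix.entryLinearMap ℂ ℂ i j).toContinuousLinearMap.hasFDerivAt
        ).comp_hasDerivAt s hD
    have hD3 : HasDerivAt
        (fun t : ℂ => ((((-1:ℂ)^k * (k.factorial : ℂ)) •
            (((t • E - A)⁻¹ * E) ^ k * (t • E - A)⁻¹)) i j))
        (((((-1:ℂ)^k * (k.factorial : ℂ)) • ((-((k:ℂ) + 1)) •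
            (((s • E - A)⁻¹ * E) ^ (k+1) * (s • E - A)⁻¹))) i j)) s := by
      convert hD2 using 1 <;> rfl
    rw [hD3.deriv]
    simp only [Matrix.smul_apply, smul_eq_mul, smul_smul]
    push_cast [Nat.factorial_succ, pow_succ]
    ring

end Aux

/-- The `k`-th entrywise derivative of the resolvent-type function
`s ↦ (sE - A)⁻¹` at a point `σ` where `σE - A` is invertible equals
`(-1)^k k! ((σE - A)⁻¹ E)^k (σE - A)⁻¹`, for every `k ≥ 1`. -/
theorem iteratedDeriv_resolvent
    {n : ℕ}
    (E A : Matrix (Fin n) (Fin n) ℂ)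
    (σ : ℂ) (hσ : IsUnit (σ • E - A).det)
    (k : ℕ) (hk : 1 ≤ k) :
    ∀ i j : Fin n,
      iteratedDeriv k (fun s : ℂ => (s • E - A)⁻¹ i j) σ
        = (((-1 : ℂ) ^ k * (k.factorial : ℂ)) •
            (((σ • E - A)⁻¹ * E) ^ k * (σ • E - A)⁻¹)) i j := by
  exact iter_res E A k σ hσ
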